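/- Let r ≥ 5 and p ≥ 1 be integers, and let q = p. Then the set of roots in (0,1) of the polynomial P(t) = r(p+q)t³ + (q − p − r(q+2p))t² + (2+r)p·t − p is exactly the three-element set {1/2, 1/2 − (1/2)√((r−4)/r), 1/2 + (1/2)√((r−4)/r)}; in particular the numbers 1/2 ± (1/2)√((r−4)/r) lie in (0,1), are roots of P, and are distinct from each other and from 1/2. -/
import Mathlib


theorem stmt_7 (r p q : ℕ) (hr : 5 ≤ r) (hp : 1 ≤ p) (hq : q = p) :
    ({t : ℝ | t ∈ Set.Ioo (0 : ℝ) 1 ∧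
        (r : ℝ) * (p + q) * t ^ 3 + ((q : ℝ) - p - r * (q + 2 * p)) * t ^ 2
          + (2 + r) * p * t - p = 0}
      = {1 / 2, 1 / 2 - 1 / 2 * Real.sqrt (((r : ℝ) - 4) / r),
          1 / 2 + 1 / 2 * Real.sqrt (((r : ℝ) - 4) / r)})
    ∧ (1 / 2 - 1 / 2 * Real.sqrt (((r : ℝ) - 4) / r) ∈ Set.Ioo (0 : ℝ) 1)
    ∧ (1 / 2 + 1 / 2 * Real.sqrt (((r : ℝ) - 4) / r) ∈ Set.Ioo (0 : ℝ) 1)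
    ∧ (1 / 2 - 1 / 2 * Real.sqrt (((r : ℝ) - 4) / r)
        ≠ 1 / 2 + 1 / 2 * Real.sqrt (((r : ℝ) - 4) / r))
    ∧ (1 / 2 - 1 / 2 * Real.sqrt (((r : ℝ) - 4) / r) ≠ 1 / 2)
    ∧ (1 / 2 + 1 / 2 * Real.sqrt (((r : ℝ) - 4) / r) ≠ 1 / 2) := by
  subst hq
  have hrR : (5:ℝ) ≤ (r:ℝ) := by exact_mod_cast hr
  have hpR : (1:ℝ) ≤ (q:ℝ) := by exact_mod_cast hp
  have hr0 : (0:ℝ) < (r:ℝ) := by linarith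
  set s := Real.sqrt (((r:ℝ) - 4) / r) with hs
  have hs2 : s ^ 2 = ((r:ℝ) - 4) / r :=
    Real.sq_sqrt (div_nonneg (by linarith) hr0.le)
  have hrs : (r:ℝ) * s ^ 2 = (r:ℝ) - 4 := by
    rw [hs2]; field_simp
  have hs0 : 0 < s := Real.sqrt_pos.mpr (div_pos (by linarith) hr0)
  have hs1 : s < 1 := by
    have h1 : s ^ 2 < 1 := by
      rw [hs2, div_lt_one hr0]; linarith
    nlinarith
  refine ⟨?_, ⟨by linarith, by linarith⟩, ⟨by linarith, by linarith⟩,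
    by intro h; linarith, by intro h; linarith, by intro h; linarith⟩
  ext t
  simp only [Set.mem_setOf_eq, Set.mem_insert_iff, Set.mem_singleton_iff, Set.mem_Ioo]
  constructor
  · rintro ⟨⟨ht0, ht1⟩, heq⟩
    have hfac : (q:ℝ) * ((2 * t - 1) * ((r:ℝ) * t ^ 2 - (r:ℝ) * t + 1)) = 0 := by
      linear_combination heq
    have hp0 : (q:ℝ) ≠ 0 := by linarith
    have h1 : (2 * t - 1) * ((r:ℝ) * t ^ 2 - (r:ℝ) * t + 1) = 0 :=
      (mul_eq_zero.mp hfac).resolve_left hp0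
    rcases mul_eq_zero.mp h1 with h2 | h2
    · left; linarith
    · have h3 : (r:ℝ) * ((t - (1 / 2 - 1 / 2 * s)) * (t - (1 / 2 + 1 / 2 * s))) = 0 := by
        linear_combination h2 - (1 / 4) * hrs
      have h4 := (mul_eq_zero.mp h3).resolve_left hr0.ne'
      rcases mul_eq_zero.mp h4 with h5 | h5
      · right; left; linarith
      · right; right; linarith
  · rintro (rfl | rfl | rfl)
    · exact ⟨⟨by norm_num, by norm_num⟩, by ring⟩
    · exact ⟨⟨by linarith, by linarith⟩, by linear_combination (-(q:ℝ) * s / 4) * hrs⟩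
    · exact ⟨⟨by linarith, by linarith⟩, by linear_combination ((q:ℝ) * s / 4) * hrs⟩
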